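/- Let X be a Polish space and σ a finer Polish topology on X. Then there is a dense G_δ subset G of (X, original topology) on which the two topologies coincide (the identity map (G,σ↾G) → (G, original↾G) is a homeomorphism). -/

import Mathlib

open Set TopologicalSpace MeasureTheory Topology

theorem finer_polish_topology_agrees_on_dense_Gdelta
    {X : Type*} (τ σ : TopologicalSpace X)
    (hfine : σ ≤ τ) (hτ : @PolishSpace X τ) (hσ : @PolishSpace X σ) :
    ∃ G : Set X, @Dense X τ G ∧ @IsGδ X τ G ∧
      TopologicalSpace.induced (Subtype.val : G → X) σ =
        TopologicalSpace.induced (Subtype.val : G → X) τ := by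
  letI : TopologicalSpace X := τ
  haveI : PolishSpace X := hτ
  letI m : MeasurableSpace X := borel X
  haveI : BorelSpace X := ⟨rfl⟩
  haveI : BaireSpace X := by
    letI := upgradeIsCompletelyMetrizable X
    exact BaireSpace.of_completelyPseudoMetrizable
  -- countable basis of σ
  obtain ⟨b, bct, -, bbasis⟩ :=
    @TopologicalSpace.exists_countable_basis X σ hσ.toSecondCountableTopology
  haveI := bct.to_subtype
  -- every σ-open set is τ-Borel
  have hmeas : ∀ U ∈ b, MeasurableSet U := by
    intro U hU
    have hUo : @IsOpen X σ U := @TopologicalSpace.IsTopologicalBasis.isOpen X σ U b bbasis hU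
    have : @MeasurableSet X (@borel X σ) U :=
      MeasurableSpace.measurableSet_generateFrom hUo
    rwa [borel_eq_borel_of_le hσ hτ hfine] at this
  have key : ∀ U : b, ∃ v : Set X, IsOpen v ∧ (U : Set X) =ᵇ v := fun U =>
    (hmeas U U.2).residualEq_isOpen
  choose v hvopen hveq using key
  have hRmem : ∀ U : b, {x | x ∈ (U : Set X) ↔ x ∈ v U} ∈ residual X := by
    intro U
    filter_upwards [hveq U] with x hx
    exact iff_of_eq hx
  have hR : (⋂ U : b, {x | x ∈ (U : Set X) ↔ x ∈ v U}) ∈ residual X :=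
    countable_iInter_mem.2 hRmem
  obtain ⟨G, hGsub, hGδ, hGdense⟩ := mem_residual.1 hR
  refine ⟨G, hGdense, hGδ, ?_⟩
  refine le_antisymm (induced_mono hfine) ?_
  intro S hS
  rw [@isOpen_induced_iff _ _ σ] at hS
  rw [isOpen_induced_iff]
  obtain ⟨T, hT, rfl⟩ := hS
  obtain ⟨bs, hbs, rfl⟩ := @TopologicalSpace.IsTopologicalBasis.open_eq_sUnion X σ b bbasis _ hT
  refine ⟨⋃ U : bs, v ⟨U, hbs U.2⟩, isOpen_iUnion fun U => hvopen _, ?_⟩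
  ext x
  simp only [mem_preimage, mem_iUnion, mem_sUnion]
  constructor
  · rintro ⟨U, hxv⟩
    have hx := hGsub x.2
    rw [mem_iInter] at hx
    exact ⟨U, U.2, (hx ⟨U, hbs U.2⟩).2 hxv⟩
  · rintro ⟨U, hUbs, hxU⟩
    have hx := hGsub x.2
    rw [mem_iInter] at hx
    exact ⟨⟨U, hUbs⟩, (hx ⟨U, hbs hUbs⟩).1 hxU⟩
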